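/- Let Ω be a metric space, (Ω, ℝ, σ) a flow on Ω, E a metric space, and φ : ℝ₊ × E × Ω → E a continuous cocycle over (Ω, ℝ, σ). Let ω₀ ∈ Ω be Poisson stable under (Ω, ℝ, σ), i.e., ω₀ ∈ ω_{ω₀} ∩ α_{ω₀}, and suppose there exists u₀ ∈ E such that the set {φ(t, u₀, ω₀) : t ≥ 0} has compact closure in E. Then there exists u ∈ E such that the point (u, ω₀) is Poisson stable in the positive direction under the skew-product semiflow π(t, (v, ω)) := (φ(t, v, ω), σ(t, ω)) on E × Ω, i.e., (u, ω₀) belongs to its own ω-limit set. -/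

import Mathlib

open Filter Topology NNReal

namespace PoissonAux

variable {Ω E : Type*} [MetricSpace Ω] [MetricSpace E]

/-- The set of limits of `φ (T n) u ω₀` along sequences of times `T n → ∞` with
`σ (T n) ω₀ → ω₀`. -/
def F (σ : ℝ → Ω → Ω) (φ : ℝ≥0 → E → Ω → E) (ω₀ : Ω) (u : E) : Set E :=
  {v | ∃ T : ℕ → ℝ≥0, Tendsto T atTop atTop ∧
    Tendsto (fun n => φ (T n) u ω₀) atTop (𝓝 v) ∧
    Tendsto (fun n => σ ((T n : ℝ)) ω₀) atTop (𝓝 ω₀)}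

variable {σ : ℝ → Ω → Ω} {φ : ℝ≥0 → E → Ω → E} {ω₀ : Ω}

lemma tendsto_phi (hφcont : Continuous fun p : ℝ≥0 × E × Ω => φ p.1 p.2.1 p.2.2)
    {x : ℕ → E} {y : ℕ → Ω} {v : E} {ω : Ω} (t : ℝ≥0)
    (hx : Tendsto x atTop (𝓝 v)) (hy : Tendsto y atTop (𝓝 ω)) :
    Tendsto (fun n => φ t (x n) (y n)) atTop (𝓝 (φ t v ω)) := by
  have : Tendsto (fun n => ((t, x n, y n) : ℝ≥0 × E × Ω)) atTop (𝓝 (t, v, ω)) :=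
    tendsto_const_nhds.prodMk_nhds (hx.prodMk_nhds hy)
  exact (hφcont.tendsto _).comp this

lemma tendsto_sigma (hσcont : Continuous fun p : ℝ × Ω => σ p.1 p.2)
    {y : ℕ → Ω} {ω : Ω} (t : ℝ) (hy : Tendsto y atTop (𝓝 ω)) :
    Tendsto (fun n => σ t (y n)) atTop (𝓝 (σ t ω)) := by
  have : Tendsto (fun n => ((t, y n) : ℝ × Ω)) atTop (𝓝 (t, ω)) :=
    tendsto_const_nhds.prodMk_nhds hy
  exact (hσcont.tendsto _).comp this

/-- Lemma A : trajectory of a limit point stays in the closed set `K`. -/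
lemma traj_of_mem_F (hφcont : Continuous fun p : ℝ≥0 × E × Ω => φ p.1 p.2.1 p.2.2)
    (hφadd : ∀ (t τ : ℝ≥0) (u : E) (ω : Ω),
      φ (t + τ) u ω = φ t (φ τ u ω) (σ (τ : ℝ) ω))
    {K : Set E} (hK : IsClosed K) {u v : E}
    (hu : ∀ t : ℝ≥0, φ t u ω₀ ∈ K) (hv : v ∈ F σ φ ω₀ u) :
    ∀ t : ℝ≥0, φ t v ω₀ ∈ K := by
  obtain ⟨T, -, hT2, hT3⟩ := hv
  intro t
  have h1 : Tendsto (fun n => φ (t + T n) u ω₀) atTop (𝓝 (φ t v ω₀)) := by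
    have := tendsto_phi hφcont t hT2 hT3
    refine this.congr fun n => ?_
    rw [hφadd]
  exact hK.mem_of_tendsto h1 (Eventually.of_forall fun n => hu _)

/-- Lemma B : transitivity. -/
lemma trans_mem_F (hσcont : Continuous fun p : ℝ × Ω => σ p.1 p.2)
    (hσadd : ∀ (t τ : ℝ) (ω : Ω), σ (t + τ) ω = σ t (σ τ ω))
    (hφcont : Continuous fun p : ℝ≥0 × E × Ω => φ p.1 p.2.1 p.2.2)
    (hφadd : ∀ (t τ : ℝ≥0) (u : E) (ω : Ω),
      φ (t + τ) u ω = φ t (φ τ u ω) (σ (τ : ℝ) ω))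
    {u v w : E} (hv : v ∈ F σ φ ω₀ u) (hw : w ∈ F σ φ ω₀ v) :
    w ∈ F σ φ ω₀ u := by
  obtain ⟨T, hT1, hT2, hT3⟩ := hv
  obtain ⟨S, hS1, hS2, hS3⟩ := hw
  have key : ∀ m : ℕ, ∃ N : ℕ,
      dist (φ (S m + T N) u ω₀) (φ (S m) v ω₀) < 1 / (m + 1) ∧
      dist (σ ((S m + T N : ℝ≥0) : ℝ) ω₀) (σ ((S m : ℝ)) ω₀) < 1 / (m + 1) ∧
      (m : ℝ≥0) ≤ S m + T N := by
    intro m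
    have hpos : (0 : ℝ) < 1 / (m + 1) := by positivity
    have h1 : Tendsto (fun n => φ (S m + T n) u ω₀) atTop (𝓝 (φ (S m) v ω₀)) := by
      have := tendsto_phi hφcont (S m) hT2 hT3
      refine this.congr fun n => ?_
      rw [hφadd]
    have h2 : Tendsto (fun n => σ ((S m + T n : ℝ≥0) : ℝ) ω₀) atTop
        (𝓝 (σ ((S m : ℝ)) ω₀)) := by
      have := tendsto_sigma hσcont ((S m : ℝ)) hT3
      refine this.congr fun n => ?_
      rw [NNReal.coe_add, hσadd]
    have e1 := (Metric.tendsto_nhds.1 h1) _ hpos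
    have e2 := (Metric.tendsto_nhds.1 h2) _ hpos
    have e3 : ∀ᶠ n in atTop, (m : ℝ≥0) ≤ S m + T n := by
      filter_upwards [hT1.eventually_ge_atTop (m : ℝ≥0)] with n hn
      exact le_add_of_nonneg_of_le zero_le hn
    exact ((e1.and e2).and e3).exists.imp fun N h => ⟨h.1.1, h.1.2, h.2⟩
  choose N hN1 hN2 hN3 using key
  refine ⟨fun m => S m + T (N m), ?_, ?_, ?_⟩
  · exact tendsto_atTop_mono hN3 (tendsto_natCast_atTop_atTop)
  · have hd : Tendsto (fun m => dist (φ (S m) v ω₀) (φ (S m + T (N m)) u ω₀)) atTop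
        (𝓝 (0 : ℝ)) :=
      squeeze_zero (fun m => dist_nonneg)
        (fun m => by rw [dist_comm]; exact (hN1 m).le)
        tendsto_one_div_add_atTop_nhds_zero_nat
    exact hS2.congr_dist hd
  · have hd : Tendsto (fun m => dist (σ ((S m : ℝ)) ω₀)
        (σ ((S m + T (N m) : ℝ≥0) : ℝ) ω₀)) atTop (𝓝 (0 : ℝ)) :=
      squeeze_zero (fun m => dist_nonneg)
        (fun m => by rw [dist_comm]; exact (hN2 m).le)
        tendsto_one_div_add_atTop_nhds_zero_nat
    exact hS3.congr_dist hd

/-- Lemma C : `F u` is closed. -/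
lemma isClosed_F (u : E) : IsClosed (F σ φ ω₀ u) := by
  refine IsSeqClosed.isClosed fun x v hx hxv => ?_
  have key : ∀ k : ℕ, ∃ R : ℝ≥0,
      dist (φ R u ω₀) (x k) < 1 / (k + 1) ∧
      dist (σ ((R : ℝ)) ω₀) ω₀ < 1 / (k + 1) ∧ (k : ℝ≥0) ≤ R := by
    intro k
    obtain ⟨T, hT1, hT2, hT3⟩ := hx k
    have hpos : (0 : ℝ) < 1 / (k + 1) := by positivity
    have e1 := (Metric.tendsto_nhds.1 hT2) _ hpos
    have e2 := (Metric.tendsto_nhds.1 hT3) _ hpos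
    have e3 := hT1.eventually_ge_atTop (k : ℝ≥0)
    obtain ⟨N, hN⟩ := ((e1.and e2).and e3).exists
    exact ⟨T N, hN.1.1, hN.1.2, hN.2⟩
  choose R hR1 hR2 hR3 using key
  refine ⟨R, ?_, ?_, ?_⟩
  · exact tendsto_atTop_mono hR3 (tendsto_natCast_atTop_atTop)
  · have hd : Tendsto (fun k => dist (φ (R k) u ω₀) v) atTop (𝓝 0) := by
      have hb : ∀ k : ℕ, dist (φ (R k) u ω₀) v ≤ 1 / (k + 1) + dist (x k) v := fun k =>
        (dist_triangle _ (x k) v).trans (by gcongr; exact (hR1 k).le)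
      refine squeeze_zero (fun k => dist_nonneg) hb ?_
      have := tendsto_one_div_add_atTop_nhds_zero_nat.add
        (tendsto_iff_dist_tendsto_zero.1 hxv)
      simpa using this
    exact tendsto_iff_dist_tendsto_zero.2 hd
  · refine tendsto_iff_dist_tendsto_zero.2 ?_
    exact squeeze_zero (fun k => dist_nonneg) (fun k => (hR2 k).le)
      tendsto_one_div_add_atTop_nhds_zero_nat

/-- Lemma E : if the trajectory of `u` stays in the compact set `K`, then `F u` is
nonempty (using Poisson stability of `ω₀`). -/
lemma nonempty_F {K : Set E} (hK : IsCompact K)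
    (hω : ∃ T : ℕ → ℝ, Tendsto T atTop atTop ∧
      Tendsto (fun n => σ (T n) ω₀) atTop (𝓝 ω₀))
    {u : E} (hu : ∀ t : ℝ≥0, φ t u ω₀ ∈ K) : (F σ φ ω₀ u).Nonempty := by
  obtain ⟨T, hT1, hT2⟩ := hω
  set T' : ℕ → ℝ≥0 := fun n => Real.toNNReal (T n) with hT'
  have hT'1 : Tendsto T' atTop atTop := tendsto_real_toNNReal_atTop.comp hT1
  have hcoe : ∀ᶠ n in atTop, ((T' n : ℝ)) = T n := by
    filter_upwards [hT1.eventually_ge_atTop 0] with n hn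
    simp [hT', Real.coe_toNNReal _ hn]
  have hT'2 : Tendsto (fun n => σ ((T' n : ℝ)) ω₀) atTop (𝓝 ω₀) := by
    refine hT2.congr' ?_
    filter_upwards [hcoe] with n hn
    rw [hn]
  obtain ⟨a, haK, ψ, hψ, hconv⟩ := hK.tendsto_subseq (fun n => hu (T' n))
  exact ⟨a, T' ∘ ψ, hT'1.comp hψ.tendsto_atTop, hconv,
    hT'2.comp hψ.tendsto_atTop⟩

/-- `F u ⊆ K` if the trajectory of `u` stays in the closed set `K`. -/
lemma F_subset {K : Set E} (hK : IsClosed K) {u : E}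
    (hu : ∀ t : ℝ≥0, φ t u ω₀ ∈ K) : F σ φ ω₀ u ⊆ K := by
  rintro v ⟨T, -, hT2, -⟩
  exact hK.mem_of_tendsto hT2 (Eventually.of_forall fun n => hu _)

end PoissonAux

open PoissonAux

/-- Let `φ` be a continuous cocycle over a flow `(Ω, ℝ, σ)` with fiber a metric space
`E`. If `ω₀ ∈ Ω` is Poisson stable and some trajectory `{φ(t, u₀, ω₀) : t ≥ 0}` has
compact closure in `E`, then there exists `u ∈ E` such that `(u, ω₀)` is Poisson stable
in the positive direction under the skew-product semiflow
`π(t, (v, ω)) = (φ(t, v, ω), σ(t, ω))`, i.e. `(u, ω₀)` belongs to its own ω-limit set. -/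
theorem skew_product_has_poisson_stable_point {Ω E : Type*}
    [MetricSpace Ω] [MetricSpace E]
    (σ : ℝ → Ω → Ω)
    (hσcont : Continuous fun p : ℝ × Ω => σ p.1 p.2)
    (hσid : ∀ ω : Ω, σ 0 ω = ω)
    (hσadd : ∀ (t τ : ℝ) (ω : Ω), σ (t + τ) ω = σ t (σ τ ω))
    (φ : ℝ≥0 → E → Ω → E)
    (hφcont : Continuous fun p : ℝ≥0 × E × Ω => φ p.1 p.2.1 p.2.2)
    (hφid : ∀ (u : E) (ω : Ω), φ 0 u ω = u)
    (hφadd : ∀ (t τ : ℝ≥0) (u : E) (ω : Ω),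
      φ (t + τ) u ω = φ t (φ τ u ω) (σ (τ : ℝ) ω))
    (ω₀ : Ω)
    (hω : ∃ T : ℕ → ℝ, Tendsto T atTop atTop ∧
      Tendsto (fun n => σ (T n) ω₀) atTop (𝓝 ω₀))
    (hα : ∃ T : ℕ → ℝ, Tendsto T atTop atBot ∧
      Tendsto (fun n => σ (T n) ω₀) atTop (𝓝 ω₀))
    (u₀ : E)
    (hb : IsCompact (closure (Set.range fun t : ℝ≥0 => φ t u₀ ω₀))) :
    ∃ u : E, ∃ T : ℕ → ℝ≥0, Tendsto T atTop atTop ∧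
      Tendsto (fun n => ((φ (T n) u ω₀, σ ((T n : ℝ≥0) : ℝ) ω₀) : E × Ω)) atTop
        (𝓝 ((u, ω₀) : E × Ω)) := by
  classical
  set K : Set E := closure (Set.range fun t : ℝ≥0 => φ t u₀ ω₀) with hKdef
  have hKcl : IsClosed K := isClosed_closure
  -- The family of candidate sets for Zorn's lemma.
  set S : Set (Set E) :=
    {C | C.Nonempty ∧ IsClosed C ∧ C ⊆ K ∧
      ∀ v ∈ C, (∀ t : ℝ≥0, φ t v ω₀ ∈ K) ∧ F σ φ ω₀ v ⊆ C} with hSdef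
  have hu₀traj : ∀ t : ℝ≥0, φ t u₀ ω₀ ∈ K := fun t =>
    subset_closure ⟨t, rfl⟩
  -- `F u₀` belongs to the family.
  have hFu₀ : F σ φ ω₀ u₀ ∈ S := by
    refine ⟨nonempty_F hb hω hu₀traj, isClosed_F u₀, F_subset hKcl hu₀traj, ?_⟩
    intro v hv
    exact ⟨traj_of_mem_F hφcont hφadd hKcl hu₀traj hv,
      fun w hw => trans_mem_F hσcont hσadd hφcont hφadd hv hw⟩
  -- Zorn's lemma gives a minimal element of `S`.
  obtain ⟨M, -, hMS, hMmin⟩ :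
      ∃ M, M ⊆ F σ φ ω₀ u₀ ∧ Minimal (· ∈ S) M := by
    refine zorn_superset_nonempty S ?_ _ hFu₀
    intro c hcS hc hcne
    refine ⟨⋂₀ c, ?_, fun s hs => Set.sInter_subset_of_mem hs⟩
    have hne : (⋂₀ c).Nonempty := by
      haveI : Nonempty c := hcne.to_subtype
      rw [Set.sInter_eq_iInter]
      refine IsCompact.nonempty_iInter_of_directed_nonempty_isCompact_isClosed
        (fun i : c => (i : Set E)) ?_ (fun i => (hcS i.2).1)
        (fun i => (hb.of_isClosed_subset (hcS i.2).2.1 (hcS i.2).2.2.1))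
        (fun i => (hcS i.2).2.1)
      intro i j
      rcases hc.total i.2 j.2 with h | h
      · exact ⟨i, le_refl _, h⟩
      · exact ⟨j, h, le_refl _⟩
    refine ⟨hne, isClosed_sInter fun s hs => (hcS hs).2.1, ?_, ?_⟩
    · obtain ⟨s, hs⟩ := hcne
      exact (Set.sInter_subset_of_mem hs).trans (hcS hs).2.2.1
    · intro v hv
      obtain ⟨s, hs⟩ := hcne
      refine ⟨((hcS hs).2.2.2 v (hv s hs)).1, ?_⟩
      intro w hw
      intro s' hs'
      exact ((hcS hs').2.2.2 v (hv s' hs')).2 hw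
  -- A point of the minimal set is in its own limit set.
  obtain ⟨v, hvM⟩ := hMS.1
  have hvtraj : ∀ t : ℝ≥0, φ t v ω₀ ∈ K := (hMS.2.2.2 v hvM).1
  have hFvS : F σ φ ω₀ v ∈ S := by
    refine ⟨nonempty_F hb hω hvtraj, isClosed_F v, F_subset hKcl hvtraj, ?_⟩
    intro w hw
    exact ⟨traj_of_mem_F hφcont hφadd hKcl hvtraj hw,
      fun z hz => trans_mem_F hσcont hσadd hφcont hφadd hw hz⟩
  have hFvM : F σ φ ω₀ v ⊆ M := (hMS.2.2.2 v hvM).2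
  have : F σ φ ω₀ v = M := Set.Subset.antisymm hFvM (hMmin hFvS hFvM)
  have hvFv : v ∈ F σ φ ω₀ v := this ▸ hvM
  obtain ⟨T, hT1, hT2, hT3⟩ := hvFv
  exact ⟨v, T, hT1, hT2.prodMk_nhds hT3⟩
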